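/- For q ∈ K with q ≠ 0 and q ≠ 1, the map X ↦ x/(q-1), Y ↦ y, T ↦ t - xy extends to a K-algebra isomorphism from the Gaddis algebra GH_{1,q} (relations YX - qXY = T, XT = TX, YT = TY) to the generalized Heisenberg algebra H(qt) (relations tx = qxt, yt = qty, yx - xy = (q-1)t). -/

import Mathlib

/- STATEMENT 5: for q ≠ 0, 1, the map X ↦ x/(q-1), Y ↦ y, T ↦ t - xy extends to a
K-algebra isomorphism GH_{1,q} ≃ H(qt). -/

noncomputable section

open FreeAlgebra Polynomial

variable (K : Type) [Field K]

/-- Relations of `GH_{p,q}`. T = ι 0, X = ι 1, Y = ι 2. -/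
inductive ghpqRel (p q : K) : FreeAlgebra K (Fin 3) → FreeAlgebra K (Fin 3) → Prop
  | r1 : ghpqRel p q (ι K (2 : Fin 3) * ι K (1 : Fin 3) - q • (ι K (1 : Fin 3) * ι K (2 : Fin 3)))
      (ι K (0 : Fin 3))
  | r2 : ghpqRel p q (ι K (1 : Fin 3) * ι K (0 : Fin 3)) (p • (ι K (0 : Fin 3) * ι K (1 : Fin 3)))
  | r3 : ghpqRel p q (ι K (2 : Fin 3) * ι K (0 : Fin 3)) (p⁻¹ • (ι K (0 : Fin 3) * ι K (2 : Fin 3)))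

/-- The Gaddis two-parameter quantum Heisenberg algebra. -/
abbrev GHpq (p q : K) := RingQuot (ghpqRel K p q)

/-- Generators of `GH_{p,q}`. -/
def ghpqGen (p q : K) (i : Fin 3) : GHpq K p q :=
  RingQuot.mkAlgHom K (ghpqRel K p q) (ι K i)

/-- Relations of the generalized Heisenberg algebra `H(f)`. t = ι 0, x = ι 1, y = ι 2. -/
inductive ghaRel (f : Polynomial K) : FreeAlgebra K (Fin 3) → FreeAlgebra K (Fin 3) → Prop
  | r1 : ghaRel f (ι K (0 : Fin 3) * ι K (1 : Fin 3))
      (ι K (1 : Fin 3) * Polynomial.aeval (ι K (0 : Fin 3)) f)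
  | r2 : ghaRel f (ι K (2 : Fin 3) * ι K (0 : Fin 3))
      (Polynomial.aeval (ι K (0 : Fin 3)) f * ι K (2 : Fin 3))
  | r3 : ghaRel f (ι K (2 : Fin 3) * ι K (1 : Fin 3) - ι K (1 : Fin 3) * ι K (2 : Fin 3))
      (Polynomial.aeval (ι K (0 : Fin 3)) f - ι K (0 : Fin 3))

/-- The generalized Heisenberg algebra `H(f)`. -/
abbrev GHA (f : Polynomial K) := RingQuot (ghaRel K f)

/-- Generators of `H(f)`. -/
def ghaGen (f : Polynomial K) (i : Fin 3) : GHA K f :=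
  RingQuot.mkAlgHom K (ghaRel K f) (ι K i)

theorem stmt5 (q : K) (hq0 : q ≠ 0) (hq1 : q ≠ 1) :
    ∃ φ : GHpq K 1 q ≃ₐ[K] GHA K (C q * X),
      φ (ghpqGen K 1 q 1) = (q - 1)⁻¹ • ghaGen K (C q * X) 1 ∧
      φ (ghpqGen K 1 q 2) = ghaGen K (C q * X) 2 ∧
      φ (ghpqGen K 1 q 0) =
        ghaGen K (C q * X) 0 - ghaGen K (C q * X) 1 * ghaGen K (C q * X) 2 := by
  have hq1' : q - 1 ≠ 0 := sub_ne_zero.mpr hq1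
  simp only [ghpqGen, ghaGen]
  set t' := RingQuot.mkAlgHom K (ghaRel K (C q * X)) (ι K 0) with ht'
  set x' := RingQuot.mkAlgHom K (ghaRel K (C q * X)) (ι K 1) with hx'
  set y' := RingQuot.mkAlgHom K (ghaRel K (C q * X)) (ι K 2) with hy'
  set T' := RingQuot.mkAlgHom K (ghpqRel K 1 q) (ι K 0) with hT'
  set X' := RingQuot.mkAlgHom K (ghpqRel K 1 q) (ι K 1) with hX'
  set Y' := RingQuot.mkAlgHom K (ghpqRel K 1 q) (ι K 2) with hY'
  -- relations in GHA
  have hA1 : t' * x' = q • (x' * t') := by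
    have h := RingQuot.mkAlgHom_rel K (ghaRel.r1 (f := C q * X))
    simp only [map_mul, map_smul, Polynomial.aeval_mul, Polynomial.aeval_C, Polynomial.aeval_X,
      AlgHom.commutes, ← Algebra.smul_def, mul_smul_comm] at h
    rw [← ht', ← hx'] at h
    exact h
  have hA2 : y' * t' = q • (t' * y') := by
    have h := RingQuot.mkAlgHom_rel K (ghaRel.r2 (f := C q * X))
    simp only [map_mul, map_smul, Polynomial.aeval_mul, Polynomial.aeval_C, Polynomial.aeval_X,
      AlgHom.commutes, ← Algebra.smul_def, smul_mul_assoc] at h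
    rw [← ht', ← hy'] at h
    exact h
  have hA3 : y' * x' = x' * y' + (q - 1) • t' := by
    have h := RingQuot.mkAlgHom_rel K (ghaRel.r3 (f := C q * X))
    simp only [map_mul, map_sub, map_smul, Polynomial.aeval_mul, Polynomial.aeval_C,
      Polynomial.aeval_X, AlgHom.commutes, ← Algebra.smul_def] at h
    rw [← ht', ← hx', ← hy'] at h
    linear_combination (norm := module) h
  -- relations in GHpq
  have hG1 : Y' * X' = q • (X' * Y') + T' := by
    have h := RingQuot.mkAlgHom_rel K (ghpqRel.r1 (p := (1:K)) (q := q))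
    simp only [map_mul, map_sub, map_smul] at h
    rw [← hT', ← hX', ← hY'] at h
    linear_combination (norm := module) h
  have hG2 : X' * T' = T' * X' := by
    have h := RingQuot.mkAlgHom_rel K (ghpqRel.r2 (p := (1:K)) (q := q))
    simp only [map_mul, map_smul, one_smul] at h
    rw [← hT', ← hX'] at h
    exact h
  have hG3 : Y' * T' = T' * Y' := by
    have h := RingQuot.mkAlgHom_rel K (ghpqRel.r3 (p := (1:K)) (q := q))
    simp only [map_mul, map_smul, inv_one, one_smul] at h
    rw [← hT', ← hY'] at h
    exact h
  -- forward map
  set Φ0 : FreeAlgebra K (Fin 3) →ₐ[K] GHA K (C q * X) :=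
    FreeAlgebra.lift K ![t' - x' * y', (q - 1)⁻¹ • x', y'] with hΦ0
  have hΦw : ∀ ⦃a b⦄, ghpqRel K 1 q a b → Φ0 a = Φ0 b := by
    rintro a b (_|_|_) <;>
      simp only [map_sub, map_mul, map_smul, map_one, hΦ0, FreeAlgebra.lift_ι_apply,
        Matrix.cons_val_zero, Matrix.cons_val_one, Matrix.head_cons, Matrix.cons_val_two,
        Matrix.tail_cons, one_smul, inv_one]
    · -- Y X - q X Y = T
      rw [mul_smul_comm, smul_mul_assoc, hA3]
      match_scalars <;> field_simp <;> ring
    · -- X T = T X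
      rw [smul_mul_assoc, mul_smul_comm]
      congr 1
      rw [mul_sub, sub_mul, hA1, mul_assoc x' y' x', hA3, mul_add, mul_smul_comm]
      module
    · -- Y T = T Y
      rw [mul_sub, sub_mul, hA2, ← mul_assoc y' x' y', hA3, add_mul, smul_mul_assoc]
      module
  set Φ : GHpq K 1 q →ₐ[K] GHA K (C q * X) := RingQuot.liftAlgHom K ⟨Φ0, hΦw⟩ with hΦdef
  set Ψ0 : FreeAlgebra K (Fin 3) →ₐ[K] GHpq K 1 q :=
    FreeAlgebra.lift K ![T' + (q - 1) • (X' * Y'), (q - 1) • X', Y'] with hΨ0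
  have hΨw : ∀ ⦃a b⦄, ghaRel K (C q * X) a b → Ψ0 a = Ψ0 b := by
    rintro a b (_|_|_) <;>
      simp only [map_sub, map_mul, map_smul, map_add, Polynomial.aeval_mul, Polynomial.aeval_C,
        Polynomial.aeval_X, AlgHom.commutes, ← Algebra.smul_def, hΨ0, FreeAlgebra.lift_ι_apply,
        Matrix.cons_val_zero, Matrix.cons_val_one, Matrix.head_cons, Matrix.cons_val_two,
        Matrix.tail_cons]
    · -- t x = x (q t)
      simp only [mul_smul_comm, smul_mul_assoc, mul_add, add_mul, smul_add, smul_smul, mul_assoc]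
      rw [hG1]
      simp only [mul_add, mul_smul_comm, smul_add, smul_smul, hG2]
      module
    · -- y t = (q t) y
      simp only [mul_smul_comm, smul_mul_assoc, mul_add, add_mul, smul_add, smul_smul, mul_assoc]
      rw [← mul_assoc Y' X' Y', hG1, hG3]
      simp only [add_mul, smul_mul_assoc, mul_assoc, smul_add, smul_smul]
      module
    · -- y x - x y = (q-1) t
      simp only [mul_smul_comm, smul_mul_assoc, smul_sub, smul_add, smul_smul]
      rw [hG1]
      module
  set Ψ : GHA K (C q * X) →ₐ[K] GHpq K 1 q := RingQuot.liftAlgHom K ⟨Ψ0, hΨw⟩ with hΨdef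
  have hc1 : Φ.comp Ψ = AlgHom.id K (GHA K (C q * X)) := by
    ext i
    fin_cases i <;>
      simp only [AlgHom.coe_comp, Function.comp_apply, AlgHom.coe_id, id_eq, Fin.isValue,
        Fin.zero_eta, Fin.mk_one, Fin.reduceFinMk, hΨdef, hΦdef, ht', hx', hy', hT', hX', hY', RingQuot.liftAlgHom_mkAlgHom_apply,
        hΨ0, hΦ0, FreeAlgebra.lift_ι_apply, Matrix.cons_val_zero, Matrix.cons_val_one,
        Matrix.head_cons, Matrix.cons_val_two, Matrix.tail_cons, map_add, map_sub, map_mul,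
        map_smul]
    · rw [smul_mul_assoc, smul_smul, mul_inv_cancel₀ hq1', one_smul, sub_add_cancel]
    · rw [smul_smul, mul_inv_cancel₀ hq1', one_smul]
  have hc2 : Ψ.comp Φ = AlgHom.id K (GHpq K 1 q) := by
    ext i
    fin_cases i <;>
      simp only [AlgHom.coe_comp, Function.comp_apply, AlgHom.coe_id, id_eq, Fin.isValue,
        Fin.zero_eta, Fin.mk_one, Fin.reduceFinMk, hΨdef, hΦdef, ht', hx', hy', hT', hX', hY',
        RingQuot.liftAlgHom_mkAlgHom_apply,
        hΨ0, hΦ0, FreeAlgebra.lift_ι_apply, Matrix.cons_val_zero, Matrix.cons_val_one,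
        Matrix.head_cons, Matrix.cons_val_two, Matrix.tail_cons, map_add, map_sub, map_mul,
        map_smul]
    · rw [smul_mul_assoc, add_sub_cancel_right]
    · rw [smul_smul, inv_mul_cancel₀ hq1', one_smul]
  refine ⟨AlgEquiv.ofAlgHom Φ Ψ hc1 hc2, ?_, ?_, ?_⟩ <;>
  · show Φ _ = _
    simp only [hΦdef, ht', hx', hy', hT', hX', hY',
      RingQuot.liftAlgHom_mkAlgHom_apply, hΦ0, FreeAlgebra.lift_ι_apply, Matrix.cons_val_zero,
      Matrix.cons_val_one, Matrix.head_cons, Matrix.cons_val_two, Matrix.tail_cons]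

end
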